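/- For every d ≥ 2, the tripartite generalized GHZ state satisfies X_d^{⊗3} |GHZ_{d,3}⟩ = |GHZ_{d,3}⟩ and (Z_d^{d−2} ⊗ Z_d ⊗ Z_d) |GHZ_{d,3}⟩ = |GHZ_{d,3}⟩, and consequently 𝒞₂(GHZ_{d,3}) = log₂ d, the maximal value, attained when every subsystem is measured in the eigenbasis of Z_d (the computational basis) in one round and the eigenbasis of X_d (the Fourier basis) in the other. -/

import Mathlib

open scoped BigOperators ComplexOrder

namespace Paper

noncomputable section

/-- Base-2 Shannon entropy of a finitely indexed probability vector. -/
def shannon {α : Type*} [Fintype α] (p : α → ℝ) : ℝ :=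
  ∑ a, -(p a * Real.logb 2 (p a))

/-- Joint outcome type for `n` subsystems of local dimension `d`. -/
abbrev Idx (n d : ℕ) := Fin n → Fin d

/-- The projector `|ψ⟩⟨ψ|`. -/
def proj {α : Type*} (ψ : α → ℂ) : Matrix α α ℂ :=
  Matrix.of fun x y => ψ x * (starRingEnd ℂ) (ψ y)

/-- A density operator: positive semidefinite with trace one. -/
def IsDensityOp {α : Type*} [Fintype α] [DecidableEq α] (ρ : Matrix α α ℂ) : Prop :=
  ρ.PosSemidef ∧ ρ.trace = 1

/-- `B` is an orthonormal basis of `ℂ^d` (`B i` is the `i`-th basis vector). -/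
def IsONB {d : ℕ} (B : Fin d → Fin d → ℂ) : Prop :=
  ∀ i j, (∑ x, (starRingEnd ℂ) (B i x) * B j x) = if i = j then 1 else 0

/-- Two bases of `ℂ^d` are mutually unbiased. -/
def MutUnbiased {d : ℕ} (B B' : Fin d → Fin d → ℂ) : Prop :=
  ∀ i j, ‖∑ x, (starRingEnd ℂ) (B i x) * B' j x‖ ^ 2 = 1 / d

/-- Joint outcome distribution of measuring the orthonormal basis `B l` on each factor `l`. -/
def jointProb {n d : ℕ} (ρ : Matrix (Idx n d) (Idx n d) ℂ)
    (B : Fin n → Fin d → Fin d → ℂ) (i : Idx n d) : ℝ :=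
  (∑ x : Idx n d, ∑ y : Idx n d,
    (∏ l, (starRingEnd ℂ) (B l (i l) (x l))) * ρ x y * (∏ l, B l (i l) (y l))).re

/-- Marginal distribution of subsystem `l`. -/
def margAt {n d : ℕ} (p : Idx n d → ℝ) (l : Fin n) (i : Fin d) : ℝ :=
  ∑ x : Idx n d, if x l = i then p x else 0

/-- Insert outcome `i` at position `l` into a tuple of outcomes of the other subsystems. -/
def insertAt {n d : ℕ} (l : Fin n) (i : Fin d) (g : {m : Fin n // m ≠ l} → Fin d) : Idx n d :=
  fun m => if h : m = l then i else g ⟨m, h⟩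

/-- Marginal distribution of all subsystems except `l`. -/
def margRest {n d : ℕ} (p : Idx n d → ℝ) (l : Fin n)
    (g : {m : Fin n // m ≠ l} → Fin d) : ℝ :=
  ∑ i : Fin d, p (insertAt l i g)

/-- Mutual information `I(B⁽ˡ⁾ : B⁽ˡ̄⁾)` between the outcome at subsystem `l` and the
outcomes at the remaining subsystems, for the joint outcome distribution `p`. -/
def mutualInfo {n d : ℕ} (p : Idx n d → ℝ) (l : Fin n) : ℝ :=
  shannon (margAt p l) + shannon (margRest p l) - shannon p

/-- The correlation function `C_N(ρ, {B_k^{(l)}})`. -/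
def CNval {n d : ℕ} (N : ℕ) (ρ : Matrix (Idx n d) (Idx n d) ℂ)
    (B : Fin N → Fin n → Fin d → Fin d → ℂ) : ℝ :=
  (1 / (n * N)) * ∑ k, ∑ l, mutualInfo (jointProb ρ (B k)) l

/-- `B k l` is, for each subsystem `l`, a family of `N` pairwise mutually unbiased
orthonormal bases (indexed by `k`). -/
def ValidMUBs {n d : ℕ} (N : ℕ) (B : Fin N → Fin n → Fin d → Fin d → ℂ) : Prop :=
  (∀ k l, IsONB (B k l)) ∧ ∀ l k k', k ≠ k' → MutUnbiased (B k l) (B k' l)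

/-- The set of values `C_N(ρ, ·)` over all admissible choices of MUBs;
`𝒞_N(ρ)` is the supremum of this set. -/
def CNvalues {n d : ℕ} (N : ℕ) (ρ : Matrix (Idx n d) (Idx n d) ℂ) : Set ℝ :=
  {x | ∃ B : Fin N → Fin n → Fin d → Fin d → ℂ, ValidMUBs N B ∧ x = CNval N ρ B}

/-- Single-subsystem reduced state `tr_{l̄} ρ`. -/
def reducedAt {n d : ℕ} (ρ : Matrix (Idx n d) (Idx n d) ℂ) (l : Fin n) :
    Matrix (Fin d) (Fin d) ℂ :=
  Matrix.of fun i j =>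
    ∑ g : {m : Fin n // m ≠ l} → Fin d, ρ (insertAt l i g) (insertAt l j g)

/-- `ω_d = exp(2πi/d)`. -/
def ω (d : ℕ) : ℂ := Complex.exp (2 * Real.pi * Complex.I / d)

/-- The generalized Pauli operator `X_d`. -/
def Xmat (d : ℕ) : Matrix (Fin d) (Fin d) ℂ :=
  Matrix.of fun i j => if (i : ℕ) = ((j : ℕ) + 1) % d then 1 else 0

/-- The generalized Pauli operator `Z_d`. -/
def Zmat (d : ℕ) : Matrix (Fin d) (Fin d) ℂ :=
  Matrix.of fun i j => if i = j then ω d ^ (i : ℕ) else 0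

/-- The generalized Pauli operator `S_{d,(k₁,k₂)} = X_d^{k₁} Z_d^{k₂}`. -/
def Smat (d : ℕ) (k : Fin d × Fin d) : Matrix (Fin d) (Fin d) ℂ :=
  Xmat d ^ (k.1 : ℕ) * Zmat d ^ (k.2 : ℕ)

/-- Apply a local operator `A l` to each tensor factor of a multipartite vector `ψ`,
i.e. the vector `(⊗_l A l) ψ`. -/
def applyLocal {n d : ℕ} (A : Fin n → Matrix (Fin d) (Fin d) ℂ) (ψ : Idx n d → ℂ) :
    Idx n d → ℂ :=
  fun x => ∑ y : Idx n d, (∏ l, A l (x l) (y l)) * ψ y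

/-- The computational (standard) basis of `ℂ^d`, the eigenbasis of `Z_d`. -/
def stdBasis (d : ℕ) : Fin d → Fin d → ℂ :=
  fun i x => if x = i then 1 else 0

/-- The Fourier basis of `ℂ^d`, the eigenbasis of `X_d`. -/
def fourierBasis (d : ℕ) : Fin d → Fin d → ℂ :=
  fun i x => (((Real.sqrt d)⁻¹ : ℝ) : ℂ) * ω d ^ ((i : ℕ) * (x : ℕ))

/-- The `n`-fold tensor product `⊗_l A l` as a matrix on the joint system. -/
def tensorN {n d : ℕ} (A : Fin n → Matrix (Fin d) (Fin d) ℂ) :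
    Matrix (Idx n d) (Idx n d) ℂ :=
  Matrix.of fun x y => ∏ l, A l (x l) (y l)

/-- Full separability of an `n`-partite density operator. -/
def FullySep {n d : ℕ} (ρ : Matrix (Idx n d) (Idx n d) ℂ) : Prop :=
  ∃ (J : ℕ) (p : Fin J → ℝ) (σ : Fin J → Fin n → Matrix (Fin d) (Fin d) ℂ),
    (∀ j, 0 ≤ p j) ∧ (∑ j, p j) = 1 ∧ (∀ j l, IsDensityOp (σ j l)) ∧
    ρ = ∑ j, p j • tensorN (σ j)

/-- generalized GHZ state `(1/√d) ∑_i |i⟩^{⊗n}`. -/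
def GHZvec (d n : ℕ) : Idx n d → ℂ :=
  fun x => if ∀ l l', x l = x l' then (((Real.sqrt d)⁻¹ : ℝ) : ℂ) else 0



/-! ### Auxiliary lemmas -/

section Aux

open Finset

variable {n d : ℕ}

lemma omega_pow_d (hd : d ≠ 0) : ω d ^ d = 1 :=
  (Complex.isPrimitiveRoot_exp d hd).pow_eq_one

lemma omega_prim (hd : d ≠ 0) : IsPrimitiveRoot (ω d) d :=
  Complex.isPrimitiveRoot_exp d hd

lemma abs_omega (hd : d ≠ 0) : ‖ω d‖ = 1 := by
  rw [ω]
  have : (2 * (Real.pi : ℂ) * Complex.I / d) = Complex.I * ((2 * Real.pi / d : ℝ) : ℂ) := by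
    push_cast; ring
  rw [this, Complex.norm_exp]
  simp [Complex.mul_re]

lemma conj_omega_pow (hd : d ≠ 0) (k : ℕ) :
    (starRingEnd ℂ) (ω d ^ k) = ω d ^ (k * (d - 1)) := by
  have h1 : ω d ^ (d - 1) * ω d = 1 := by
    rw [← pow_succ, Nat.sub_add_cancel (Nat.one_le_iff_ne_zero.2 hd)]
    exact omega_pow_d hd
  have hinv : (ω d)⁻¹ = ω d ^ (d - 1) := by
    exact inv_eq_of_mul_eq_one_right (by rw [mul_comm]; exact h1)
  have habs : Complex.normSq (ω d) = 1 := by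
    have := abs_omega hd
    rw [← Complex.sq_norm, this, one_pow]
  have hconj : (starRingEnd ℂ) (ω d) = (ω d)⁻¹ := by
    rw [Complex.inv_def, habs]
    simp
  rw [map_pow, hconj, hinv, ← pow_mul, mul_comm (d-1) k]

lemma sum_omega_pow (hd : 0 < d) (c : ℕ) :
    ∑ x : Fin d, ω d ^ (c * (x : ℕ)) = if d ∣ c then (d : ℂ) else 0 := by
  have hprim := omega_prim hd.ne'
  by_cases h : d ∣ c
  · rw [if_pos h]
    have hc : ω d ^ c = 1 := (hprim.pow_eq_one_iff_dvd c).2 h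
    have : ∀ x : Fin d, ω d ^ (c * (x : ℕ)) = 1 := by
      intro x; rw [pow_mul, hc, one_pow]
    simp [this]
  · rw [if_neg h]
    have hne : ω d ^ c ≠ 1 := fun hc => h ((hprim.pow_eq_one_iff_dvd c).1 hc)
    have : ∀ x : Fin d, ω d ^ (c * (x : ℕ)) = (ω d ^ c) ^ (x : ℕ) := by
      intro x; rw [← pow_mul]
    simp_rw [this]
    rw [Fin.sum_univ_eq_sum_range (fun i => (ω d ^ c) ^ i) d, geom_sum_eq hne,
      ← pow_mul, mul_comm c d, pow_mul, omega_pow_d hd.ne', one_pow]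
    simp

/-- Exactly one residue in `Fin d` satisfies a congruence. -/
lemma sum_fin_dvd {M : Type*} [AddCommMonoid M] (hd : 0 < d) (c : ℕ) (A : M) :
    (∑ i : Fin d, if d ∣ ((i : ℕ) + c) then A else 0) = A := by
  have hmodlt : c % d < d := Nat.mod_lt _ hd
  set v : ℕ := (d - c % d) % d with hv
  have hvlt : v < d := Nat.mod_lt _ hd
  have hdiv : d * (c / d) + c % d = c := Nat.div_add_mod c d
  have h0 : (v + c) % d = 0 := by
    rw [hv, Nat.mod_add_mod]
    have : d - c % d + c = d + d * (c / d) := by omega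
    rw [this, Nat.add_mul_mod_self_left, Nat.mod_self]
  have hdvd0 : d ∣ v + c := Nat.dvd_of_mod_eq_zero h0
  rw [Finset.sum_eq_single_of_mem (⟨v, hvlt⟩ : Fin d) (mem_univ _)]
  · rw [if_pos hdvd0]
  · intro b _ hb
    rw [if_neg]
    intro hbdvd
    apply hb
    have hb0 : ((b : ℕ) + c) % d = 0 := Nat.mod_eq_zero_of_dvd hbdvd
    have h1 : ((b : ℕ) + c) % d = (v + c) % d := by rw [hb0, h0]
    have h2 : (b : ℕ) % d = v % d := Nat.ModEq.add_right_cancel' c h1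
    have hb1 : (b : ℕ) % d = (b : ℕ) := Nat.mod_eq_of_lt b.isLt
    have hv1 : v % d = v := Nat.mod_eq_of_lt hvlt
    exact Fin.ext (by simp only [Fin.val_mk]; omega)

@[simp] lemma insertAt_self (l : Fin n) (i : Fin d) (g : {m : Fin n // m ≠ l} → Fin d) :
    insertAt l i g l = i := dif_pos rfl

lemma insertAt_ne (l : Fin n) (i : Fin d) (g : {m : Fin n // m ≠ l} → Fin d)
    (m : {m : Fin n // m ≠ l}) : insertAt l i g m = g m := by
  rw [insertAt, dif_neg m.2]

/-- Splitting off coordinate `l`. -/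
def insEquiv (l : Fin n) : (Fin d × ({m : Fin n // m ≠ l} → Fin d)) ≃ Idx n d where
  toFun p := insertAt l p.1 p.2
  invFun x := (x l, fun m => x m)
  left_inv p := by
    obtain ⟨i, g⟩ := p
    refine Prod.ext ?_ ?_
    · exact insertAt_self l i g
    · funext m; exact insertAt_ne l i g m
  right_inv x := by
    funext m
    by_cases h : m = l
    · subst h; exact insertAt_self _ _ _
    · exact insertAt_ne l (x l) _ ⟨m, h⟩

lemma sum_ins {M : Type*} [AddCommMonoid M] (l : Fin n) (f : Idx n d → M) :
    ∑ x, f x = ∑ i : Fin d, ∑ g : {m : Fin n // m ≠ l} → Fin d, f (insertAt l i g) := by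
  rw [← Equiv.sum_comp (insEquiv (d := d) l) f, Fintype.sum_prod_type]
  rfl

lemma margAt_eq (p : Idx n d → ℝ) (l : Fin n) (i : Fin d) :
    margAt p l i = ∑ g : {m : Fin n // m ≠ l} → Fin d, p (insertAt l i g) := by
  rw [margAt, sum_ins l (fun x => if x l = i then p x else 0)]
  rw [Finset.sum_eq_single_of_mem i (Finset.mem_univ _)]
  · apply Finset.sum_congr rfl
    intro g _
    rw [if_pos (insertAt_self l i g)]
  · intro b _ hb
    apply Finset.sum_eq_zero
    intro g _
    rw [if_neg]
    rw [insertAt_self]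
    exact hb

lemma sum_margAt (p : Idx n d → ℝ) (l : Fin n) :
    ∑ i, margAt p l i = ∑ x, p x := by
  simp_rw [margAt_eq]
  rw [sum_ins l p]

lemma sum_margRest (p : Idx n d → ℝ) (l : Fin n) :
    ∑ g, margRest p l g = ∑ x, p x := by
  rw [sum_ins l p, Finset.sum_comm]
  rfl

lemma sum_insertAt_nat (l : Fin n) (i : Fin d) (g : {m : Fin n // m ≠ l} → Fin d) :
    ∑ m : Fin n, ((insertAt l i g m : Fin d) : ℕ)
      = (i : ℕ) + ∑ m : {m : Fin n // m ≠ l}, ((g m : Fin d) : ℕ) := by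
  rw [← Finset.add_sum_erase Finset.univ _ (Finset.mem_univ l), insertAt_self]
  congr 1
  rw [Finset.sum_subtype (p := fun m => m ≠ l) (Finset.univ.erase l)
    (fun x => by simp [Finset.mem_erase]) (fun m => ((insertAt l i g m : Fin d) : ℕ))]
  apply Finset.sum_congr rfl
  intro m _
  rw [insertAt_ne]

lemma insertAt_diag_iff (l : Fin n) (i : Fin d) (g : {m : Fin n // m ≠ l} → Fin d) :
    (∀ l' l'', insertAt l i g l' = insertAt l i g l'') ↔ (∀ m, g m = i) := by
  constructor
  · intro h m
    have := h (m : Fin n) l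
    rwa [insertAt_ne l i g m, insertAt_self] at this
  · intro h l' l''
    by_cases h1 : l' = l <;> by_cases h2 : l'' = l
    · subst h1; subst h2; rfl
    · rw [insertAt, insertAt, dif_pos h1, dif_neg h2, h ⟨l'', h2⟩]
    · rw [insertAt, insertAt, dif_neg h1, dif_pos h2, h ⟨l', h1⟩]
    · rw [insertAt, insertAt, dif_neg h1, dif_neg h2, h ⟨l', h1⟩, h ⟨l'', h2⟩]

/-- Two free coordinates: count of solutions of a congruence. -/
lemma sum_pi2_dvd {β : Type*} [Fintype β] [DecidableEq β] (hβ : Fintype.card β = 2)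
    (hd : 0 < d) (c : ℕ) (A : ℝ) :
    (∑ g : β → Fin d, if d ∣ (c + ∑ m, ((g m : Fin d) : ℕ)) then A else 0) = d * A := by
  classical
  obtain e := Fintype.equivFinOfCardEq hβ
  have key : ∀ g : β → Fin d,
      (c + ∑ m, ((g m : Fin d) : ℕ)) = ((g (e.symm 1) : Fin d) : ℕ) + (c + ((g (e.symm 0) : Fin d) : ℕ)) := by
    intro g
    have hsum : ∑ m : β, ((g m : Fin d) : ℕ) = ∑ j : Fin 2, ((g (e.symm j) : Fin d) : ℕ) :=
      Fintype.sum_equiv e (fun m => ((g m : Fin d) : ℕ))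
        (fun j => ((g (e.symm j) : Fin d) : ℕ)) (fun m => by simp)
    rw [hsum, Fin.sum_univ_two]
    omega
  simp_rw [key]
  rw [Fintype.sum_equiv (Equiv.arrowCongr e (Equiv.refl (Fin d)))
    (fun g : β → Fin d => if d ∣ (((g (e.symm 1) : Fin d) : ℕ) + (c + ((g (e.symm 0) : Fin d) : ℕ))) then A else 0)
    (fun h : Fin 2 → Fin d => if d ∣ ((h 1 : ℕ) + (c + (h 0 : ℕ))) then A else 0)
    (fun g => rfl)]
  rw [Fintype.sum_equiv (piFinTwoEquiv (fun _ => Fin d))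
    (fun h : Fin 2 → Fin d => if d ∣ ((h 1 : ℕ) + (c + (h 0 : ℕ))) then A else 0)
    (fun q : Fin d × Fin d => if d ∣ ((q.2 : ℕ) + (c + (q.1 : ℕ))) then A else 0)
    (fun h => rfl)]
  rw [Fintype.sum_prod_type]
  have hinner : ∀ a : Fin d,
      (∑ b : Fin d, if d ∣ ((b : ℕ) + (c + (a : ℕ))) then A else 0) = A :=
    fun a => sum_fin_dvd hd (c + (a : ℕ)) A
  simp_rw [hinner]
  rw [Finset.sum_const, Finset.card_univ, Fintype.card_fin, nsmul_eq_mul]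

/-- Entropy of a distribution taking only values `0` and `1/m`. -/
lemma shannon_uniform {α : Type*} [Fintype α] (p : α → ℝ) (m : ℕ)
    (h : ∀ a, p a = 0 ∨ p a = 1 / (m : ℝ)) (hsum : ∑ a, p a = 1) :
    shannon p = Real.logb 2 m := by
  have hterm : ∀ a, -(p a * Real.logb 2 (p a)) = p a * Real.logb 2 m := by
    intro a
    rcases h a with h | h <;> rw [h]
    · simp
    · rw [one_div, Real.logb_inv]
      ring
  rw [shannon]
  simp_rw [hterm]
  rw [← Finset.sum_mul, hsum, one_mul]

/-- Maximum entropy of a distribution on a finite set. -/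
lemma shannon_le_logb_card {α : Type*} [Fintype α] (p : α → ℝ)
    (hp : ∀ a, 0 ≤ p a) (hsum : ∑ a, p a = 1) :
    shannon p ≤ Real.logb 2 (Fintype.card α) := by
  classical
  set D : ℕ := Fintype.card α with hD
  have hD0 : 0 < D := by
    by_contra h
    have hD' : D = 0 := by omega
    have : (Finset.univ : Finset α) = ∅ := by
      rw [← Finset.card_eq_zero, Finset.card_univ, ← hD, hD']
    rw [this] at hsum
    simp at hsum
  have hlog2 : (0:ℝ) < Real.log 2 := Real.log_pos (by norm_num)
  have hDR : (0:ℝ) < (D:ℝ) := by exact_mod_cast hD0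
  have key : ∀ a, -(p a * Real.logb 2 (p a))
      ≤ (1/(D:ℝ) - p a) / Real.log 2 + p a * Real.logb 2 D := by
    intro a
    rcases eq_or_lt_of_le (hp a) with h | h
    · rw [← h]
      have h1 : (0:ℝ) ≤ (1/(D:ℝ) - 0) / Real.log 2 := by
        apply div_nonneg _ hlog2.le
        simp only [sub_zero]
        positivity
      simpa using h1
    · have hpd : (0:ℝ) < 1 / ((D:ℝ) * p a) := by positivity
      have hlog := Real.log_le_sub_one_of_pos hpd
      have hmul := mul_le_mul_of_nonneg_left hlog (le_of_lt h)
      have hsimp : p a * (1 / ((D:ℝ) * p a) - 1) = 1/(D:ℝ) - p a := by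
        field_simp
      rw [hsimp] at hmul
      have hexp : Real.log (1 / ((D:ℝ) * p a)) = -(Real.log D) - Real.log (p a) := by
        rw [one_div, Real.log_inv, Real.log_mul (ne_of_gt hDR) (ne_of_gt h)]
        ring
      rw [hexp] at hmul
      have hkey : -(p a * Real.log (p a)) - p a * Real.log (D:ℝ) ≤ 1/(D:ℝ) - p a := by
        nlinarith
      have h2 := mul_le_mul_of_nonneg_right hkey (inv_nonneg.mpr hlog2.le)
      simp only [Real.logb, div_eq_mul_inv]
      ring_nf at h2 ⊢
      linarith
  calc shannon p = ∑ a, -(p a * Real.logb 2 (p a)) := rfl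
    _ ≤ ∑ a, ((1/(D:ℝ) - p a) / Real.log 2 + p a * Real.logb 2 D) :=
        Finset.sum_le_sum fun a _ => key a
    _ = (∑ a, (1/(D:ℝ) - p a)) / Real.log 2 + (∑ a, p a) * Real.logb 2 D := by
        rw [Finset.sum_add_distrib, ← Finset.sum_div, ← Finset.sum_mul]
    _ = Real.logb 2 D := by
        rw [Finset.sum_sub_distrib, hsum, Finset.sum_const, Finset.card_univ, ← hD,
          nsmul_eq_mul, mul_one_div, div_self (ne_of_gt hDR)]
        simp

/-- Grouping decreases entropy contribution. -/
lemma shannon_glue {d : ℕ} (f : Fin d → ℝ) (hf : ∀ i, 0 ≤ f i) :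
    -((∑ i, f i) * Real.logb 2 (∑ i, f i)) ≤ ∑ i, -(f i * Real.logb 2 (f i)) := by
  set S := ∑ i, f i with hS
  have key : ∀ i, -(f i * Real.logb 2 S) ≤ -(f i * Real.logb 2 (f i)) := by
    intro i
    rcases eq_or_lt_of_le (hf i) with h | h
    · rw [← h]; simp
    · have hfS : f i ≤ S := Finset.single_le_sum (fun j _ => hf j) (Finset.mem_univ i)
      have h1 : Real.logb 2 (f i) ≤ Real.logb 2 S :=
        Real.logb_le_logb_of_le (by norm_num) h hfS
      have := mul_le_mul_of_nonneg_left h1 (le_of_lt h)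
      linarith
  calc -(S * Real.logb 2 S) = ∑ i, -(f i * Real.logb 2 S) := by
        rw [Finset.sum_neg_distrib, ← Finset.sum_mul, ← hS]
    _ ≤ ∑ i, -(f i * Real.logb 2 (f i)) := Finset.sum_le_sum fun i _ => key i

lemma shannon_margRest_le (p : Idx n d → ℝ) (hp : ∀ x, 0 ≤ p x) (l : Fin n) :
    shannon (margRest p l) ≤ shannon p := by
  have hrw : shannon p = ∑ g : {m : Fin n // m ≠ l} → Fin d,
      ∑ i : Fin d, -(p (insertAt l i g) * Real.logb 2 (p (insertAt l i g))) := by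
    rw [shannon, sum_ins l (fun x => -(p x * Real.logb 2 (p x))), Finset.sum_comm]
  rw [hrw, shannon]
  apply Finset.sum_le_sum
  intro g _
  exact shannon_glue (fun i => p (insertAt l i g)) (fun i => hp _)

lemma mutualInfo_le_logb (p : Idx n d → ℝ) (hp : ∀ x, 0 ≤ p x) (hsum : ∑ x, p x = 1)
    (l : Fin n) : mutualInfo p l ≤ Real.logb 2 d := by
  have h1 : shannon (margAt p l) ≤ Real.logb 2 d := by
    have := shannon_le_logb_card (margAt p l)
      (fun i => Finset.sum_nonneg fun x _ => by
        by_cases h : x l = i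
        · rw [if_pos h]; exact hp x
        · rw [if_neg h])
      (by rw [sum_margAt, hsum])
    rwa [Fintype.card_fin] at this
  have h2 : shannon (margRest p l) ≤ shannon p := shannon_margRest_le p hp l
  rw [mutualInfo]
  linarith

/-- Amplitude of a joint outcome for a pure state. -/
def amp {n d : ℕ} (ψ : Idx n d → ℂ) (B : Fin n → Fin d → Fin d → ℂ) (i : Idx n d) : ℂ :=
  ∑ x : Idx n d, (∏ l, (starRingEnd ℂ) (B l (i l) (x l))) * ψ x

lemma jointProb_proj (ψ : Idx n d → ℂ) (B : Fin n → Fin d → Fin d → ℂ) (i : Idx n d) :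
    jointProb (proj ψ) B i = Complex.normSq (amp ψ B i) := by
  have hfact : (∑ x : Idx n d, ∑ y : Idx n d,
      (∏ l, (starRingEnd ℂ) (B l (i l) (x l))) * proj ψ x y * (∏ l, B l (i l) (y l)))
      = amp ψ B i * (starRingEnd ℂ) (amp ψ B i) := by
    rw [amp, map_sum, Finset.sum_mul]
    apply Finset.sum_congr rfl
    intro x _
    rw [Finset.mul_sum]
    apply Finset.sum_congr rfl
    intro y _
    simp only [proj, Matrix.of_apply, map_mul, map_prod, Complex.conj_conj]
    ring
  rw [jointProb, hfact, Complex.mul_conj]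
  simp

lemma onb_complete {B : Fin d → Fin d → ℂ} (h : IsONB B) (x y : Fin d) :
    (∑ i, (starRingEnd ℂ) (B i x) * B i y) = if x = y then 1 else 0 := by
  classical
  set U : Matrix (Fin d) (Fin d) ℂ := Matrix.of (fun i x => B i x) with hU
  have h1 : U * U.conjTranspose = 1 := by
    ext i j
    rw [Matrix.mul_apply, Matrix.one_apply]
    simp only [Matrix.conjTranspose_apply, hU, Matrix.of_apply, ← starRingEnd_apply]
    have h2 := congrArg (starRingEnd ℂ) (h i j)
    rw [map_sum] at h2
    simp only [map_mul, Complex.conj_conj, apply_ite, map_one, map_zero] at h2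
    split <;> simp_all
  have h2 : U.conjTranspose * U = 1 := mul_eq_one_comm.mp h1
  have h3 : (U.conjTranspose * U) x y = (1 : Matrix (Fin d) (Fin d) ℂ) x y := by rw [h2]
  rw [Matrix.mul_apply, Matrix.one_apply] at h3
  simp only [Matrix.conjTranspose_apply, hU, Matrix.of_apply, ← starRingEnd_apply] at h3
  exact h3

lemma sum_jointProb_proj (ψ : Idx n d → ℂ) (B : Fin n → Fin d → Fin d → ℂ)
    (hB : ∀ l, IsONB (B l)) :
    ∑ i, jointProb (proj ψ) B i = ∑ x, Complex.normSq (ψ x) := by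
  simp_rw [jointProb_proj]
  have key : (∑ i : Idx n d, (amp ψ B i * (starRingEnd ℂ) (amp ψ B i)))
      = ∑ x : Idx n d, ψ x * (starRingEnd ℂ) (ψ x) := by
    have expand : ∀ i : Idx n d, amp ψ B i * (starRingEnd ℂ) (amp ψ B i)
        = ∑ x : Idx n d, ∑ y : Idx n d,
          (∏ l, (starRingEnd ℂ) (B l (i l) (x l)) * B l (i l) (y l)) * (ψ x * (starRingEnd ℂ) (ψ y)) := by
      intro i
      rw [amp, map_sum, Finset.sum_mul_sum]
      apply Finset.sum_congr rfl; intro x _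
      apply Finset.sum_congr rfl; intro y _
      simp only [map_mul, map_prod, Complex.conj_conj]
      rw [Finset.prod_mul_distrib]
      ring
    simp_rw [expand]
    rw [Finset.sum_comm]
    have swap2 : ∀ x : Idx n d, (∑ i : Idx n d, ∑ y : Idx n d,
        (∏ l, (starRingEnd ℂ) (B l (i l) (x l)) * B l (i l) (y l)) * (ψ x * (starRingEnd ℂ) (ψ y)))
        = ∑ y : Idx n d, (∑ i : Idx n d,
          (∏ l, (starRingEnd ℂ) (B l (i l) (x l)) * B l (i l) (y l))) * (ψ x * (starRingEnd ℂ) (ψ y)) := by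
      intro x
      rw [Finset.sum_comm]
      apply Finset.sum_congr rfl; intro y _
      rw [Finset.sum_mul]
    simp_rw [swap2]
    have complete : ∀ x y : Idx n d, (∑ i : Idx n d,
        (∏ l, (starRingEnd ℂ) (B l (i l) (x l)) * B l (i l) (y l)))
        = if x = y then 1 else 0 := by
      intro x y
      have hps : ∀ l : Fin n, (∑ j : Fin d, (starRingEnd ℂ) (B l j (x l)) * B l j (y l))
          = if x l = y l then 1 else 0 := fun l => onb_complete (hB l) (x l) (y l)
      have := Finset.prod_univ_sum (fun _ : Fin n => (Finset.univ : Finset (Fin d)))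
        (fun l j => (starRingEnd ℂ) (B l j (x l)) * B l j (y l))
      rw [Fintype.piFinset_univ] at this
      rw [← this]
      simp_rw [hps]
      rw [Finset.prod_boole]
      by_cases hxy : x = y
      · subst hxy; simp
      · rw [if_neg, if_neg hxy]
        intro hall
        exact hxy (funext fun l => hall l (Finset.mem_univ l))
    simp_rw [complete]
    apply Finset.sum_congr rfl
    intro x _
    simp_rw [ite_mul, one_mul, zero_mul]
    rw [Finset.sum_ite_eq, if_pos (Finset.mem_univ x)]
  have : ∀ i : Idx n d, (Complex.normSq (amp ψ B i) : ℝ) = (amp ψ B i * (starRingEnd ℂ) (amp ψ B i)).re := by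
    intro i; rw [Complex.mul_conj]; simp
  simp_rw [this]
  rw [← Complex.re_sum, key, Complex.re_sum]
  apply Finset.sum_congr rfl
  intro x _
  rw [Complex.mul_conj]
  simp

lemma normSq_GHZ (hd : 0 < d) (x : Idx n d) :
    Complex.normSq (GHZvec d n x) = if (∀ l l', x l = x l') then 1/(d:ℝ) else 0 := by
  rw [GHZvec]
  by_cases h : ∀ l l', x l = x l'
  · rw [if_pos h, if_pos h, Complex.normSq_ofReal]
    rw [← mul_inv, Real.mul_self_sqrt (by positivity), one_div]
  · rw [if_neg h, if_neg h, map_zero]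

lemma diag_insertAt_iff' (l : Fin n) (i : Fin d) (g : {m : Fin n // m ≠ l} → Fin d) :
    (∀ l' l'', insertAt l i g l' = insertAt l i g l'') ↔ (g = fun _ => i) := by
  rw [insertAt_diag_iff, funext_iff]

lemma sum_normSq_GHZ (hd : 0 < d) (hn : 0 < n) :
    ∑ x, Complex.normSq (GHZvec d (n := n) x) = 1 := by
  set l : Fin n := ⟨0, hn⟩
  rw [sum_ins l (fun x => Complex.normSq (GHZvec d (n := n) x))]
  have inner : ∀ i : Fin d, ∑ g : {m : Fin n // m ≠ l} → Fin d,
      Complex.normSq (GHZvec d (n := n) (insertAt l i g)) = 1/(d:ℝ) := by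
    intro i
    have hval : ∀ g : {m : Fin n // m ≠ l} → Fin d,
        Complex.normSq (GHZvec d (n := n) (insertAt l i g))
          = if g = (fun _ => i) then 1/(d:ℝ) else 0 := by
      intro g
      rw [normSq_GHZ hd]
      congr 1
      rw [diag_insertAt_iff' l i g]
    simp_rw [hval]
    rw [Finset.sum_ite_eq' Finset.univ (fun _ => i) (fun _ => 1/(d:ℝ)),
      if_pos (Finset.mem_univ _)]
  simp_rw [inner]
  rw [Finset.sum_const, Finset.card_univ, Fintype.card_fin, nsmul_eq_mul]
  field_simp

lemma amp_std (hd : 0 < d) (ψ : Idx n d → ℂ) (i : Idx n d) :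
    amp ψ (fun _ => stdBasis d) i = ψ i := by
  rw [amp]
  have hterm : ∀ x : Idx n d,
      (∏ l, (starRingEnd ℂ) (stdBasis d (i l) (x l))) * ψ x
        = if x = i then ψ x else 0 := by
    intro x
    have h1 : ∀ l : Fin n, (starRingEnd ℂ) (stdBasis d (i l) (x l))
        = if x l = i l then 1 else 0 := by
      intro l
      rw [stdBasis]
      split <;> simp
    simp_rw [h1]
    rw [Finset.prod_boole]
    by_cases h : x = i
    · rw [if_pos, if_pos h, one_mul]
      intro l _
      rw [h]
    · rw [if_neg, if_neg h, zero_mul]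
      intro hall
      exact h (funext fun l => hall l (Finset.mem_univ l))
  simp_rw [hterm]
  rw [Finset.sum_ite_eq' Finset.univ i ψ, if_pos (Finset.mem_univ i)]

lemma GHZ_as_sum (hn : 0 < n) (x : Idx n d) :
    GHZvec d n x = ∑ j : Fin d, if x = (fun _ => j) then (((Real.sqrt d)⁻¹ : ℝ) : ℂ) else 0 := by
  rw [GHZvec]
  by_cases h : ∀ l l', x l = x l'
  · rw [if_pos h]
    have hx : x = fun _ => x ⟨0, hn⟩ := funext fun l => h l ⟨0, hn⟩
    rw [Finset.sum_eq_single (x ⟨0, hn⟩)]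
    · rw [if_pos hx]
    · intro j _ hj
      rw [if_neg]
      intro hxj
      exact hj ((congrFun hxj ⟨0, hn⟩).symm ▸ rfl)
    · intro habs
      exact absurd (Finset.mem_univ _) habs
  · rw [if_neg h]
    symm
    apply Finset.sum_eq_zero
    intro j _
    rw [if_neg]
    intro hxj
    exact h (fun l l' => by rw [hxj])

lemma dvd_mul_dsub1 (hd : 2 ≤ d) (S : ℕ) : d ∣ S * (d-1) ↔ d ∣ S := by
  obtain ⟨e, rfl⟩ : ∃ e, d = e + 1 := ⟨d - 1, by omega⟩
  constructor
  · intro h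
    have h2 : (e+1) ∣ S * (e+1) := dvd_mul_left (e+1) S
    have h3 : S * (e+1) - S * ((e+1)-1) = S := by
      have : S * (e+1) = S * e + S := by ring
      simp only [Nat.add_sub_cancel]
      omega
    rw [← h3]
    exact Nat.dvd_sub h2 h
  · intro h
    exact h.mul_right _

lemma amp_fourier (hd : 2 ≤ d) (i : Idx 3 d) :
    amp (GHZvec d 3) (fun _ => fourierBasis d) i
      = (((if d ∣ (∑ l, ((i l : Fin d) : ℕ)) then 1/(d:ℝ) else 0 : ℝ)) : ℂ) := by
  have hd0 : 0 < d := by omega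
  have hd0' : (d:ℕ) ≠ 0 := by omega
  set s : ℝ := (Real.sqrt d)⁻¹ with hs
  rw [amp]
  have hGHZ : ∀ x : Idx 3 d, GHZvec d 3 x
      = ∑ j : Fin d, if x = (fun _ => j) then ((s:ℝ):ℂ) else 0 := GHZ_as_sum (by norm_num)
  have step1 : ∀ x : Idx 3 d,
      (∏ l, (starRingEnd ℂ) (fourierBasis d (i l) (x l))) * GHZvec d 3 x
        = ∑ j : Fin d, if x = (fun _ => j)
            then (∏ l, (starRingEnd ℂ) (fourierBasis d (i l) (x l))) * ((s:ℝ):ℂ) else 0 := by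
    intro x
    rw [hGHZ x, Finset.mul_sum]
    apply Finset.sum_congr rfl
    intro j _
    rw [mul_ite, mul_zero]
  simp_rw [step1]
  rw [Finset.sum_comm]
  have step2 : ∀ j : Fin d,
      (∑ x : Idx 3 d, if x = (fun _ => j)
          then (∏ l, (starRingEnd ℂ) (fourierBasis d (i l) (x l))) * ((s:ℝ):ℂ) else 0)
        = (∏ l, (starRingEnd ℂ) (fourierBasis d (i l) j)) * ((s:ℝ):ℂ) := by
    intro j
    rw [Finset.sum_ite_eq' Finset.univ (fun _ => j)
      (fun x => (∏ l, (starRingEnd ℂ) (fourierBasis d (i l) (x l))) * ((s:ℝ):ℂ)),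
      if_pos (Finset.mem_univ _)]
  simp_rw [step2]
  have hconj : ∀ (a : Fin d) (j : Fin d), (starRingEnd ℂ) (fourierBasis d a j)
      = ((s:ℝ):ℂ) * ω d ^ (((a:ℕ) * (j:ℕ)) * (d-1)) := by
    intro a j
    rw [fourierBasis, map_mul, Complex.conj_ofReal, conj_omega_pow hd0']
  have hprod : ∀ j : Fin d, (∏ l : Fin 3, (starRingEnd ℂ) (fourierBasis d (i l) j))
      = ((s:ℝ):ℂ)^3 * ω d ^ (((∑ l, ((i l : Fin d) : ℕ)) * (d-1)) * (j:ℕ)) := by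
    intro j
    simp_rw [hconj]
    rw [Fin.prod_univ_three, Fin.sum_univ_three]
    have hexp : (((i 0 : ℕ) + (i 1 : ℕ) + (i 2 : ℕ))) * (d-1) * (j:ℕ)
        = (i 0:ℕ)*(j:ℕ)*(d-1) + ((i 1:ℕ)*(j:ℕ)*(d-1) + (i 2:ℕ)*(j:ℕ)*(d-1)) := by ring
    rw [hexp, pow_add, pow_add]
    ring
  simp_rw [hprod]
  have hsplit : (∑ j : Fin d, ((s:ℝ):ℂ)^3
      * ω d ^ (((∑ l, ((i l : Fin d) : ℕ)) * (d-1)) * (j:ℕ)) * ((s:ℝ):ℂ))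
      = ((s:ℝ):ℂ)^4 * ∑ j : Fin d, ω d ^ (((∑ l, ((i l : Fin d) : ℕ)) * (d-1)) * (j:ℕ)) := by
    rw [Finset.mul_sum]
    apply Finset.sum_congr rfl
    intro j _
    ring
  rw [hsplit, sum_omega_pow hd0]
  have hiff := dvd_mul_dsub1 hd (∑ l, ((i l : Fin d) : ℕ))
  by_cases h : d ∣ (∑ l, ((i l : Fin d) : ℕ))
  · rw [if_pos (hiff.mpr h), if_pos h]
    have h4 : ((s:ℝ):ℂ)^4 = ((s^4 : ℝ) : ℂ) := by push_cast; ring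
    rw [h4]
    have : (s:ℝ)^4 * (d:ℝ) = 1/(d:ℝ) := by
      rw [hs]
      have h2 : (Real.sqrt d)^2 = (d:ℝ) := Real.sq_sqrt (by positivity)
      have hdpos : (0:ℝ) < (d:ℝ) := by exact_mod_cast hd0
      have h4' : ((Real.sqrt d)⁻¹)^4 = ((d:ℝ)^2)⁻¹ := by
        rw [inv_pow, show (4:ℕ) = 2*2 from rfl, pow_mul, h2]
      rw [h4']
      field_simp
    rw [← this]
    push_cast
    ring
  · rw [if_neg (fun hc => h (hiff.mp hc)), if_neg h]
    simp

lemma jointProb_fourier (hd : 2 ≤ d) (i : Idx 3 d) :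
    jointProb (proj (GHZvec d 3)) (fun _ => fourierBasis d) i
      = if d ∣ (∑ l, ((i l : Fin d) : ℕ)) then 1/((d:ℝ)^2) else 0 := by
  rw [jointProb_proj, amp_fourier hd, Complex.normSq_ofReal]
  by_cases h : d ∣ (∑ l, ((i l : Fin d) : ℕ))
  · rw [if_pos h, if_pos h]
    field_simp
  · rw [if_neg h, if_neg h, mul_zero]

lemma jointProb_std (hd : 2 ≤ d) (i : Idx 3 d) :
    jointProb (proj (GHZvec d 3)) (fun _ => stdBasis d) i
      = if (∀ l l', i l = i l') then 1/(d:ℝ) else 0 := by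
  rw [jointProb_proj, amp_std (by omega), normSq_GHZ (by omega)]

lemma stdBasis_onb : IsONB (stdBasis d) := by
  intro i j
  have hterm : ∀ x : Fin d, (starRingEnd ℂ) (stdBasis d i x) * stdBasis d j x
      = if x = i then (if x = j then (1:ℂ) else 0) else 0 := by
    intro x
    rw [stdBasis, stdBasis]
    split_ifs <;> simp_all
  simp_rw [hterm]
  rw [Finset.sum_ite_eq' Finset.univ i (fun x => if x = j then (1:ℂ) else 0),
    if_pos (Finset.mem_univ i)]

lemma fourier_dvd_iff (hd : 2 ≤ d) (i j : Fin d) :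
    d ∣ ((i:ℕ) * (d-1) + (j:ℕ)) ↔ i = j := by
  have hd0 : 0 < d := by omega
  have hkey : (i:ℕ)*(d-1) + (j:ℕ) + (i:ℕ) = (i:ℕ)*d + (j:ℕ) := by
    obtain ⟨e, rfl⟩ : ∃ e, d = e + 1 := ⟨d - 1, by omega⟩
    simp only [Nat.add_sub_cancel]
    ring
  constructor
  · intro h
    have h1 : ((i:ℕ)*(d-1)+(j:ℕ)) % d = 0 := Nat.mod_eq_zero_of_dvd h
    have h2 : ((i:ℕ)*(d-1)+(j:ℕ)+(i:ℕ)) % d = (i:ℕ) % d := by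
      rw [Nat.add_mod, h1, Nat.zero_add, Nat.mod_mod_of_dvd]
      exact dvd_refl d
    have h3 : ((i:ℕ)*d+(j:ℕ)) % d = (j:ℕ) % d := by rw [mul_comm]; exact Nat.mul_add_mod d i j
    rw [hkey, h3] at h2
    have hi := Nat.mod_eq_of_lt i.isLt
    have hj := Nat.mod_eq_of_lt j.isLt
    exact Fin.ext (by omega)
  · intro h
    subst h
    have : (i:ℕ)*(d-1) + (i:ℕ) = (i:ℕ)*d := by
      obtain ⟨e, rfl⟩ : ∃ e, d = e + 1 := ⟨d - 1, by omega⟩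
      simp only [Nat.add_sub_cancel]
      ring
    rw [this]
    exact Dvd.dvd.mul_left (dvd_refl d) i

lemma fourierBasis_onb (hd : 2 ≤ d) : IsONB (fourierBasis d) := by
  have hd0 : 0 < d := by omega
  have hd0' : d ≠ 0 := by omega
  intro i j
  have hterm : ∀ x : Fin d, (starRingEnd ℂ) (fourierBasis d i x) * fourierBasis d j x
      = (((Real.sqrt d)⁻¹:ℝ):ℂ)^2 * ω d ^ ((((i:ℕ)*(d-1)+(j:ℕ)))*(x:ℕ)) := by
    intro x
    rw [fourierBasis, fourierBasis, map_mul, Complex.conj_ofReal, conj_omega_pow hd0',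
      show (((i:ℕ)*(d-1)+(j:ℕ)))*(x:ℕ) = (i:ℕ)*(x:ℕ)*(d-1) + (j:ℕ)*(x:ℕ) from by ring,
      pow_add]
    ring
  simp_rw [hterm]
  rw [← Finset.mul_sum, sum_omega_pow hd0]
  by_cases h : i = j
  · rw [if_pos ((fourier_dvd_iff hd i j).mpr h), if_pos h]
    have hsq : (((Real.sqrt d)⁻¹:ℝ):ℂ)^2 = (((((Real.sqrt d)⁻¹)^2 : ℝ)):ℂ) := by push_cast; ring
    have hreal : ((Real.sqrt d)⁻¹)^2 = ((d:ℝ))⁻¹ := by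
      rw [inv_pow, Real.sq_sqrt (by positivity)]
    rw [hsq, hreal]
    rw [show ((((d:ℝ))⁻¹ : ℝ):ℂ) = ((d:ℂ))⁻¹ by push_cast; ring]
    field_simp
  · rw [if_neg (fun hc => h ((fourier_dvd_iff hd i j).mp hc)), if_neg h, mul_zero]

lemma abs_fourier (hd : 2 ≤ d) (a x : Fin d) :
    ‖fourierBasis d a x‖ ^ 2 = 1 / (d:ℝ) := by
  have hd0' : d ≠ 0 := by omega
  rw [fourierBasis, norm_mul, norm_pow, abs_omega hd0', one_pow, mul_one,
    Complex.norm_real, Real.norm_eq_abs, abs_of_nonneg (by positivity)]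
  rw [inv_pow, Real.sq_sqrt (by positivity), one_div]

lemma mub_std_fourier (hd : 2 ≤ d) : MutUnbiased (stdBasis d) (fourierBasis d) := by
  intro i j
  have hterm : ∀ x : Fin d, (starRingEnd ℂ) (stdBasis d i x) * fourierBasis d j x
      = if x = i then fourierBasis d j x else 0 := by
    intro x
    rw [stdBasis]
    split_ifs <;> simp
  simp_rw [hterm]
  rw [Finset.sum_ite_eq' Finset.univ i (fourierBasis d j), if_pos (Finset.mem_univ i)]
  exact abs_fourier hd j i

lemma mub_fourier_std (hd : 2 ≤ d) : MutUnbiased (fourierBasis d) (stdBasis d) := by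
  intro i j
  have hterm : ∀ x : Fin d, (starRingEnd ℂ) (fourierBasis d i x) * stdBasis d j x
      = if x = j then (starRingEnd ℂ) (fourierBasis d i x) else 0 := by
    intro x
    rw [stdBasis]
    split_ifs <;> simp
  simp_rw [hterm]
  rw [Finset.sum_ite_eq' Finset.univ j (fun x => (starRingEnd ℂ) (fourierBasis d i x)),
    if_pos (Finset.mem_univ j), Complex.norm_conj]
  exact abs_fourier hd i j

lemma card_ne_l (l : Fin 3) : Fintype.card {m : Fin 3 // m ≠ l} = 2 := by
  have h1 : Fintype.card {m : Fin 3 // ¬ m = l} = Fintype.card (Fin 3) - Fintype.card {m : Fin 3 // m = l} :=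
    Fintype.card_subtype_compl _
  have h2 : Fintype.card {m : Fin 3 // m = l} = 1 := Fintype.card_subtype_eq l
  simp only [Fintype.card_fin] at h1
  rw [h2] at h1
  exact h1

lemma nonempty_ne_l (l : Fin 3) : Nonempty {m : Fin 3 // m ≠ l} := by
  have := card_ne_l l
  exact Fintype.card_pos_iff.mp (by omega)

section GHZdist

variable (hd : 2 ≤ d)

lemma sum_p0 (hd : 2 ≤ d) :
    ∑ i, jointProb (proj (GHZvec d 3)) (fun _ => stdBasis d) i = 1 := by
  rw [sum_jointProb_proj _ _ (fun _ => stdBasis_onb)]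
  exact sum_normSq_GHZ (by omega) (by norm_num)

lemma sum_p1 (hd : 2 ≤ d) :
    ∑ i, jointProb (proj (GHZvec d 3)) (fun _ => fourierBasis d) i = 1 := by
  rw [sum_jointProb_proj _ _ (fun _ => fourierBasis_onb hd)]
  exact sum_normSq_GHZ (by omega) (by norm_num)

lemma margAt_p0 (hd : 2 ≤ d) (l : Fin 3) (i : Fin d) :
    margAt (jointProb (proj (GHZvec d 3)) (fun _ => stdBasis d)) l i = 1/(d:ℝ) := by
  rw [margAt_eq]
  have hval : ∀ g : {m : Fin 3 // m ≠ l} → Fin d,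
      jointProb (proj (GHZvec d 3)) (fun _ => stdBasis d) (insertAt l i g)
        = if g = (fun _ => i) then 1/(d:ℝ) else 0 := by
    intro g
    rw [jointProb_std hd]
    congr 1
    rw [diag_insertAt_iff' l i g]
  simp_rw [hval]
  rw [Finset.sum_ite_eq' Finset.univ (fun _ => i) (fun _ => 1/(d:ℝ)),
    if_pos (Finset.mem_univ _)]

lemma margRest_p0 (hd : 2 ≤ d) (l : Fin 3) (g : {m : Fin 3 // m ≠ l} → Fin d) :
    margRest (jointProb (proj (GHZvec d 3)) (fun _ => stdBasis d)) l g = 0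
      ∨ margRest (jointProb (proj (GHZvec d 3)) (fun _ => stdBasis d)) l g = 1/(d:ℝ) := by
  have hval : ∀ i : Fin d,
      jointProb (proj (GHZvec d 3)) (fun _ => stdBasis d) (insertAt l i g)
        = if g = (fun _ => i) then 1/(d:ℝ) else 0 := by
    intro i
    rw [jointProb_std hd]
    congr 1
    rw [diag_insertAt_iff' l i g]
  rw [margRest]
  simp_rw [hval]
  by_cases h : ∃ v : Fin d, g = fun _ => v
  · right
    obtain ⟨v, rfl⟩ := h
    obtain ⟨m₀⟩ := nonempty_ne_l l
    have hcond : ∀ i : Fin d, ((fun _ => v) = fun _ : {m : Fin 3 // m ≠ l} => i) ↔ v = i := by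
      intro i
      constructor
      · intro hf; exact congrFun hf m₀
      · intro hf; subst hf; rfl
    have : ∀ i : Fin d, (if (fun _ => v) = (fun _ : {m : Fin 3 // m ≠ l} => i) then 1/(d:ℝ) else 0)
        = if v = i then 1/(d:ℝ) else 0 := by
      intro i
      by_cases hvi : v = i
      · rw [if_pos ((hcond i).mpr hvi), if_pos hvi]
      · rw [if_neg (fun hc => hvi ((hcond i).mp hc)), if_neg hvi]
    simp_rw [this]
    rw [Finset.sum_ite_eq Finset.univ v (fun _ => 1/(d:ℝ)), if_pos (Finset.mem_univ v)]
  · left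
    apply Finset.sum_eq_zero
    intro i _
    rw [if_neg]
    intro hc
    exact h ⟨i, hc⟩

lemma margAt_p1 (hd : 2 ≤ d) (l : Fin 3) (i : Fin d) :
    margAt (jointProb (proj (GHZvec d 3)) (fun _ => fourierBasis d)) l i = 1/(d:ℝ) := by
  have hd0 : 0 < d := by omega
  rw [margAt_eq]
  have hval : ∀ g : {m : Fin 3 // m ≠ l} → Fin d,
      jointProb (proj (GHZvec d 3)) (fun _ => fourierBasis d) (insertAt l i g)
        = if d ∣ ((i:ℕ) + ∑ m, ((g m : Fin d) : ℕ)) then 1/((d:ℝ)^2) else 0 := by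
    intro g
    rw [jointProb_fourier hd]
    congr 1
    rw [sum_insertAt_nat]
  simp_rw [hval]
  rw [sum_pi2_dvd (card_ne_l l) hd0 (i:ℕ) (1/((d:ℝ)^2))]
  field_simp

lemma margRest_p1 (hd : 2 ≤ d) (l : Fin 3) (g : {m : Fin 3 // m ≠ l} → Fin d) :
    margRest (jointProb (proj (GHZvec d 3)) (fun _ => fourierBasis d)) l g = 1/((d:ℝ)^2) := by
  have hd0 : 0 < d := by omega
  rw [margRest]
  have hval : ∀ i : Fin d,
      jointProb (proj (GHZvec d 3)) (fun _ => fourierBasis d) (insertAt l i g)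
        = if d ∣ ((i:ℕ) + ∑ m, ((g m : Fin d) : ℕ)) then 1/((d:ℝ)^2) else 0 := by
    intro i
    rw [jointProb_fourier hd]
    congr 1
    rw [sum_insertAt_nat]
  simp_rw [hval]
  exact sum_fin_dvd hd0 _ _

lemma mutualInfo_p0 (hd : 2 ≤ d) (l : Fin 3) :
    mutualInfo (jointProb (proj (GHZvec d 3)) (fun _ => stdBasis d)) l = Real.logb 2 d := by
  have hd0 : 0 < d := by omega
  have hA : shannon (margAt (jointProb (proj (GHZvec d 3)) (fun _ => stdBasis d)) l)
      = Real.logb 2 d := by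
    apply shannon_uniform _ d
    · intro a; right; exact margAt_p0 hd l a
    · rw [sum_margAt, sum_p0 hd]
  have hR : shannon (margRest (jointProb (proj (GHZvec d 3)) (fun _ => stdBasis d)) l)
      = Real.logb 2 d := by
    apply shannon_uniform _ d
    · intro a; exact margRest_p0 hd l a
    · rw [sum_margRest, sum_p0 hd]
  have hJ : shannon (jointProb (proj (GHZvec d 3)) (fun _ => stdBasis d))
      = Real.logb 2 d := by
    apply shannon_uniform _ d
    · intro a
      rw [jointProb_std hd]
      by_cases h : ∀ l' l'', a l' = a l''
      · right; rw [if_pos h]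
      · left; rw [if_neg h]
    · exact sum_p0 hd
  rw [mutualInfo, hA, hR, hJ]
  ring

lemma mutualInfo_p1 (hd : 2 ≤ d) (l : Fin 3) :
    mutualInfo (jointProb (proj (GHZvec d 3)) (fun _ => fourierBasis d)) l = Real.logb 2 d := by
  have hd0 : 0 < d := by omega
  have hcast : 1/((d:ℝ)^2) = 1/(((d^2 : ℕ)):ℝ) := by push_cast; ring
  have hA : shannon (margAt (jointProb (proj (GHZvec d 3)) (fun _ => fourierBasis d)) l)
      = Real.logb 2 d := by
    apply shannon_uniform _ d
    · intro a; right; exact margAt_p1 hd l a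
    · rw [sum_margAt, sum_p1 hd]
  have hR : shannon (margRest (jointProb (proj (GHZvec d 3)) (fun _ => fourierBasis d)) l)
      = Real.logb 2 ((d^2 : ℕ)) := by
    apply shannon_uniform _ (d^2)
    · intro a; right; rw [margRest_p1 hd l a]; exact hcast
    · rw [sum_margRest, sum_p1 hd]
  have hJ : shannon (jointProb (proj (GHZvec d 3)) (fun _ => fourierBasis d))
      = Real.logb 2 ((d^2 : ℕ)) := by
    apply shannon_uniform _ (d^2)
    · intro a
      rw [jointProb_fourier hd]
      by_cases h : d ∣ (∑ l', ((a l' : Fin d) : ℕ))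
      · right; rw [if_pos h]; exact hcast
      · left; rw [if_neg h]
    · exact sum_p1 hd
  rw [mutualInfo, hA, hR, hJ]
  ring

end GHZdist

lemma X_invariant (hd : 2 ≤ d) :
    applyLocal (fun _ : Fin 3 => Xmat d) (GHZvec d 3) = GHZvec d 3 := by
  have hd0 : 0 < d := by omega
  funext x
  rw [applyLocal]
  set y₀ : Idx 3 d := fun l => ⟨((x l : ℕ) + (d-1)) % d, Nat.mod_lt _ hd0⟩ with hy₀
  have hprod : ∀ y : Idx 3 d, (∏ l, Xmat d (x l) (y l)) = if y = y₀ then 1 else 0 := by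
    intro y
    have hXl : ∀ l : Fin 3, Xmat d (x l) (y l)
        = if ((x l : ℕ)) = (((y l : ℕ))+1) % d then (1:ℂ) else 0 := fun l => rfl
    simp_rw [hXl]
    rw [Finset.prod_boole]
    congr 1
    simp only [eq_iff_iff]
    constructor
    · intro hall
      funext l
      have h1 : (x l : ℕ) = ((y l : ℕ)+1) % d := hall l (Finset.mem_univ l)
      apply Fin.ext
      show (y l : ℕ) = ((x l : ℕ) + (d-1)) % d
      rw [h1, Nat.mod_add_mod]
      have he : (y l : ℕ) + 1 + (d-1) = (y l : ℕ) + d := by omega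
      rw [he, Nat.add_mod_right]
      exact (Nat.mod_eq_of_lt (y l).isLt).symm
    · intro hy l _
      subst hy
      show (x l : ℕ) = (((x l : ℕ) + (d-1)) % d + 1) % d
      rw [Nat.mod_add_mod]
      have he : (x l : ℕ) + (d-1) + 1 = (x l : ℕ) + d := by omega
      rw [he, Nat.add_mod_right]
      exact (Nat.mod_eq_of_lt (x l).isLt).symm
  simp_rw [hprod, ite_mul, one_mul, zero_mul]
  rw [Finset.sum_ite_eq' Finset.univ y₀ (GHZvec d 3), if_pos (Finset.mem_univ _)]
  have hcond : (∀ l l', y₀ l = y₀ l') ↔ (∀ l l', x l = x l') := by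
    constructor
    · intro h l l'
      have hval : ((x l : ℕ) + (d-1)) % d = ((x l' : ℕ) + (d-1)) % d :=
        congrArg Fin.val (h l l')
      have hmod : (x l : ℕ) % d = (x l' : ℕ) % d := Nat.ModEq.add_right_cancel' (d-1) hval
      have h1 := Nat.mod_eq_of_lt (x l).isLt
      have h2 := Nat.mod_eq_of_lt (x l').isLt
      exact Fin.ext (by omega)
    · intro h l l'
      apply Fin.ext
      show ((x l : ℕ) + (d-1)) % d = ((x l' : ℕ) + (d-1)) % d
      rw [h l l']
  have hGx : GHZvec d 3 x = if ∀ l l', x l = x l' then (((Real.sqrt d)⁻¹:ℝ):ℂ) else 0 := rfl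
  have hGy : GHZvec d 3 y₀ = if ∀ l l', y₀ l = y₀ l' then (((Real.sqrt d)⁻¹:ℝ):ℂ) else 0 := rfl
  rw [hGx, hGy]
  by_cases hc : ∀ l l', x l = x l'
  · rw [if_pos (hcond.mpr hc), if_pos hc]
  · rw [if_neg (fun hcc => hc (hcond.mp hcc)), if_neg hc]

lemma Z_invariant (hd : 2 ≤ d) :
    applyLocal ![Zmat d ^ (d - 2), Zmat d, Zmat d] (GHZvec d 3) = GHZvec d 3 := by
  have hd0' : d ≠ 0 := by omega
  funext x
  rw [applyLocal]
  have hZ : Zmat d = Matrix.diagonal (fun i : Fin d => ω d ^ (i:ℕ)) := rfl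
  have hdiag : ∀ (m : ℕ) (a b : Fin d), (Zmat d ^ m) a b
      = if a = b then ω d ^ ((a:ℕ) * m) else 0 := by
    intro m a b
    rw [hZ, Matrix.diagonal_pow, Matrix.diagonal_apply]
    by_cases hab : a = b
    · rw [if_pos hab, if_pos hab, Pi.pow_apply, ← pow_mul]
    · rw [if_neg hab, if_neg hab]
  have hA : ∀ (l : Fin 3) (a b : Fin d), (![Zmat d ^ (d-2), Zmat d, Zmat d] l) a b
      = if a = b then ω d ^ ((a:ℕ) * (![d-2, 1, 1] : Fin 3 → ℕ) l) else 0 := by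
    intro l a b
    fin_cases l
    · simpa using hdiag (d-2) a b
    · have h := hdiag 1 a b
      rw [pow_one, mul_one] at h
      simpa using h
    · have h := hdiag 1 a b
      rw [pow_one, mul_one] at h
      simpa using h
  have hprod : ∀ y : Idx 3 d, (∏ l, (![Zmat d ^ (d-2), Zmat d, Zmat d] l) (x l) (y l))
      = if x = y then ∏ l, ω d ^ ((x l : ℕ) * (![d-2, 1, 1] : Fin 3 → ℕ) l) else 0 := by
    intro y
    simp_rw [hA]
    by_cases h : x = y
    · subst h
      rw [if_pos rfl]
      apply Finset.prod_congr rfl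
      intro l _
      rw [if_pos rfl]
    · rw [if_neg h]
      obtain ⟨l, hl⟩ : ∃ l, x l ≠ y l := by
        by_contra hc
        push_neg at hc
        exact h (funext hc)
      exact Finset.prod_eq_zero (Finset.mem_univ l) (if_neg hl)
  simp_rw [hprod, ite_mul, zero_mul]
  rw [Finset.sum_ite_eq Finset.univ x
    (fun y => (∏ l, ω d ^ ((x l : ℕ) * (![d-2, 1, 1] : Fin 3 → ℕ) l)) * GHZvec d 3 y),
    if_pos (Finset.mem_univ _)]
  by_cases h : ∀ l l', x l = x l'
  · have h1 : x 1 = x 0 := h 1 0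
    have h2 : x 2 = x 0 := h 2 0
    rw [Fin.prod_univ_three]
    have hk0 : (![d-2, 1, 1] : Fin 3 → ℕ) 0 = d - 2 := rfl
    have hk1 : (![d-2, 1, 1] : Fin 3 → ℕ) 1 = 1 := rfl
    have hk2 : (![d-2, 1, 1] : Fin 3 → ℕ) 2 = 1 := rfl
    rw [hk0, hk1, hk2, h1, h2, ← pow_add, ← pow_add]
    have hexp : (x 0:ℕ) * (d-2) + (x 0:ℕ) * 1 + (x 0:ℕ) * 1 = (x 0:ℕ) * d := by
      obtain ⟨e, rfl⟩ : ∃ e, d = e + 2 := ⟨d - 2, by omega⟩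
      simp only [Nat.add_sub_cancel]
      ring
    rw [hexp, pow_mul', omega_pow_d hd0', one_pow, one_mul]
  · have hG : GHZvec d 3 x = 0 := by
      rw [GHZvec, if_neg h]
    rw [hG, mul_zero]

lemma CN_upper (hd : 2 ≤ d) :
    ∀ x ∈ CNvalues 2 (proj (GHZvec d 3)), x ≤ Real.logb 2 d := by
  rintro x ⟨B, hB, rfl⟩
  have hI : ∀ (k : Fin 2) (l : Fin 3),
      mutualInfo (jointProb (proj (GHZvec d 3)) (B k)) l ≤ Real.logb 2 d := by
    intro k l
    apply mutualInfo_le_logb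
    · intro i
      rw [jointProb_proj]
      exact Complex.normSq_nonneg _
    · rw [sum_jointProb_proj _ _ (hB.1 k)]
      exact sum_normSq_GHZ (by omega) (by norm_num)
  have hsum : ∑ k : Fin 2, ∑ l : Fin 3,
      mutualInfo (jointProb (proj (GHZvec d 3)) (B k)) l ≤ 6 * Real.logb 2 d := by
    calc ∑ k : Fin 2, ∑ l : Fin 3, mutualInfo (jointProb (proj (GHZvec d 3)) (B k)) l
        ≤ ∑ _k : Fin 2, ∑ _l : Fin 3, Real.logb 2 d :=
          Finset.sum_le_sum fun k _ => Finset.sum_le_sum fun l _ => hI k l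
      _ = 6 * Real.logb 2 d := by
          simp [Finset.sum_const]
          ring
  have hmul := mul_le_mul_of_nonneg_left hsum (show (0:ℝ) ≤ 1/6 by norm_num)
  calc CNval 2 (proj (GHZvec d 3)) B
      = (1/6 : ℝ) * ∑ k : Fin 2, ∑ l : Fin 3,
          mutualInfo (jointProb (proj (GHZvec d 3)) (B k)) l := by
        rw [CNval]
        norm_num
    _ ≤ (1/6 : ℝ) * (6 * Real.logb 2 d) := hmul
    _ = Real.logb 2 d := by ring

lemma CN_concrete (hd : 2 ≤ d) :
    CNval 2 (proj (GHZvec d 3))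
      (fun k _ => if k = (0 : Fin 2) then stdBasis d else fourierBasis d)
      = Real.logb 2 d := by
  rw [CNval]
  have hB0 : (fun _ : Fin 3 => if (0 : Fin 2) = 0 then stdBasis d else fourierBasis d)
      = (fun _ : Fin 3 => stdBasis d) := by
    funext l
    simp
  have hB1 : (fun _ : Fin 3 => if (1 : Fin 2) = 0 then stdBasis d else fourierBasis d)
      = (fun _ : Fin 3 => fourierBasis d) := by
    funext l
    simp [show (1 : Fin 2) ≠ 0 from by decide]
  rw [Fin.sum_univ_two, hB0, hB1]
  rw [Fin.sum_univ_three, Fin.sum_univ_three]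
  rw [mutualInfo_p0 hd 0, mutualInfo_p0 hd 1, mutualInfo_p0 hd 2,
    mutualInfo_p1 hd 0, mutualInfo_p1 hd 1, mutualInfo_p1 hd 2]
  norm_num
  ring

lemma CN_mem (hd : 2 ≤ d) :
    Real.logb 2 d ∈ CNvalues 2 (proj (GHZvec d 3)) := by
  refine ⟨(fun k _ => if k = (0 : Fin 2) then stdBasis d else fourierBasis d), ⟨?_, ?_⟩,
    (CN_concrete hd).symm⟩
  · intro k l
    by_cases hk : k = 0
    · simp only [hk, if_pos rfl]
      exact stdBasis_onb
    · simp only [if_neg hk]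
      exact fourierBasis_onb hd
  · intro l k k' hkk'
    fin_cases k <;> fin_cases k'
    · exact absurd rfl hkk'
    · simp only [if_pos rfl, show (1 : Fin 2) ≠ 0 by decide, if_neg]
      exact mub_std_fourier hd
    · simp only [if_pos rfl, show (1 : Fin 2) ≠ 0 by decide, if_neg]
      exact mub_fourier_std hd
    · exact absurd rfl hkk'

end Aux

/-- The tripartite generalized GHZ state is invariant under `X_d^{⊗3}` and under
`Z_d^{d-2} ⊗ Z_d ⊗ Z_d`, and maximizes `𝒞₂`, the maximum being attained by measuring
every subsystem in the computational basis and in the Fourier basis. -/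
theorem GHZ3_maximizes_C2 (d : ℕ) (hd : 2 ≤ d) :
    applyLocal (fun _ : Fin 3 => Xmat d) (GHZvec d 3) = GHZvec d 3 ∧
    applyLocal ![Zmat d ^ (d - 2), Zmat d, Zmat d] (GHZvec d 3) = GHZvec d 3 ∧
    IsGreatest (CNvalues 2 (proj (GHZvec d 3))) (Real.logb 2 d) ∧
    CNval 2 (proj (GHZvec d 3))
      (fun k _ => if k = (0 : Fin 2) then stdBasis d else fourierBasis d)
      = Real.logb 2 d := by
  exact ⟨X_invariant hd, Z_invariant hd, ⟨CN_mem hd, CN_upper hd⟩, CN_concrete hd⟩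

end
end Paper
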